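/- Any set of unit vectors in R^n with pairwise non-positive inner products has cardinality at most 2n. -/

import Mathlib

open FiniteDimensional Finset

local notation "⟪" x ", " y "⟫" => @inner ℝ _ _ x y

lemma aux_unit_nonpos (n : ℕ) :
    ∀ (E : Type) [NormedAddCommGroup E] [InnerProductSpace ℝ E] [FiniteDimensional ℝ E],
      Module.finrank ℝ E ≤ n →
      ∀ s : Finset E, (∀ v ∈ s, ‖v‖ = 1) →
        (∀ v ∈ s, ∀ w ∈ s, v ≠ w → ⟪v, w⟫ ≤ (0:ℝ)) → s.card ≤ 2 * n := by
  induction n with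
  | zero =>
    intro E _ _ _ hd s hunit _
    have hE : Module.finrank ℝ E = 0 := Nat.le_zero.mp hd
    have : Subsingleton E := by
      rw [Module.finrank_zero_iff] at hE; exact hE
    simp only [Nat.mul_zero, Nat.le_zero, Finset.card_eq_zero]
    by_contra hne
    obtain ⟨v, hv⟩ := Finset.nonempty_iff_ne_empty.mpr hne
    have h1 := hunit v hv
    have : v = 0 := Subsingleton.elim v 0
    rw [this, norm_zero] at h1
    norm_num at h1
  | succ n ih =>
    intro E _ _ _ hd s hunit hnonpos
    classical
    rcases s.eq_empty_or_nonempty with rfl | ⟨v, hv⟩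
    · simp
    have hv1 : ‖v‖ = 1 := hunit v hv
    have hv0 : v ≠ 0 := by intro h; rw [h, norm_zero] at hv1; norm_num at hv1
    have hvv : ⟪v, v⟫ = (1:ℝ) := by
      rw [real_inner_self_eq_norm_sq, hv1]; norm_num
    set K : Submodule ℝ E := (ℝ ∙ v)ᗮ with hK
    -- projection
    set P : E → E := fun w => w - ⟪w, v⟫ • v with hP
    have hPmem : ∀ w, P w ∈ K := by
      intro w
      rw [hK, Submodule.mem_orthogonal_singleton_iff_inner_right]
      simp [hP, inner_sub_right, real_inner_smul_right, hvv, real_inner_comm v w, hv1]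
    -- inner product of projections
    have hPinner : ∀ w₁ w₂, ⟪P w₁, P w₂⟫ = ⟪w₁, w₂⟫ - ⟪w₁, v⟫ * ⟪w₂, v⟫ := by
      intro w₁ w₂
      simp only [hP, inner_sub_left, inner_sub_right, real_inner_smul_left,
        real_inner_smul_right, hvv, real_inner_comm v w₂]
      ring
    have hPle : ∀ w₁ ∈ s, ∀ w₂ ∈ s, w₁ ≠ v → w₂ ≠ v → w₁ ≠ w₂ → ⟪P w₁, P w₂⟫ ≤ 0 := by
      intro w₁ h₁ w₂ h₂ hn₁ hn₂ hne
      rw [hPinner]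
      have h12 := hnonpos w₁ h₁ w₂ h₂ hne
      have a1 := hnonpos w₁ h₁ v hv hn₁
      have a2 := hnonpos w₂ h₂ v hv hn₂
      nlinarith
    set t := s.erase v with ht
    have hcard : s.card = t.card + 1 := (Finset.card_erase_add_one hv).symm
    set t0 := t.filter (fun w => P w = 0) with ht0
    set t1 := t.filter (fun w => P w ≠ 0) with ht1
    have hsplit : t0.card + t1.card = t.card := Finset.card_filter_add_card_filter_not _
    -- t0 ⊆ {-v}
    have ht0sub : t0 ⊆ {-v} := by
      intro w hw
      simp only [ht0, Finset.mem_filter, ht, Finset.mem_erase] at hw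
      obtain ⟨⟨hwv, hws⟩, hp0⟩ := hw
      have hweq : w = ⟪w, v⟫ • v := by
        have := sub_eq_zero.mp hp0
        linear_combination (norm := module) this
      have ha : ⟪w, v⟫ ≤ 0 := hnonpos w hws v hv hwv
      have hn : ‖w‖ = 1 := hunit w hws
      have : |⟪w, v⟫| = 1 := by
        rw [hweq] at hn
        rw [norm_smul, hv1, mul_one] at hn
        exact hn
      have : ⟪w, v⟫ = -1 := by
        rcases abs_eq (by norm_num : (0:ℝ) ≤ 1) |>.mp this with h | h
        · linarith
        · exact h
      rw [Finset.mem_singleton, hweq, this, neg_one_smul]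
    have ht0c : t0.card ≤ 1 := by
      calc t0.card ≤ ({-v} : Finset E).card := Finset.card_le_card ht0sub
        _ = 1 := Finset.card_singleton _
    -- t1: map into K
    have hKrank : Module.finrank ℝ K ≤ n := by
      have h1 : Module.finrank ℝ (ℝ ∙ v) = 1 := finrank_span_singleton hv0
      have h2 := Submodule.finrank_add_finrank_orthogonal (K := (ℝ ∙ v : Submodule ℝ E))
      rw [h1, ← hK] at h2
      omega
    set g : E → K := fun w => ⟨‖P w‖⁻¹ • P w, Submodule.smul_mem _ _ (hPmem w)⟩ with hg
    have hgnorm : ∀ w, P w ≠ 0 → ‖g w‖ = 1 := by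
      intro w hw
      have : ‖(g w : E)‖ = 1 := by
        simp only [hg, norm_smul, norm_inv, norm_norm]
        exact inv_mul_cancel₀ (norm_ne_zero_iff.mpr hw)
      simpa using this
    have hginner : ∀ w₁ w₂, ⟪g w₁, g w₂⟫ = ‖P w₁‖⁻¹ * ‖P w₂‖⁻¹ * ⟪P w₁, P w₂⟫ := by
      intro w₁ w₂
      simp only [hg, Submodule.coe_inner, real_inner_smul_left, real_inner_smul_right]
      ring
    -- injectivity on t1
    have hginj : Set.InjOn g t1 := by
      intro w₁ h₁ w₂ h₂ heq
      simp only [ht1, Finset.coe_filter, Set.mem_setOf_eq, ht, Finset.mem_erase] at h₁ h₂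
      obtain ⟨⟨hn₁, hs₁⟩, hp₁⟩ := h₁
      obtain ⟨⟨hn₂, hs₂⟩, hp₂⟩ := h₂
      by_contra hne
      have hle := hPle w₁ hs₁ w₂ hs₂ hn₁ hn₂ hne
      have hpos : (0:ℝ) < ⟪g w₁, g w₂⟫ := by
        rw [heq]
        have : ⟪g w₂, g w₂⟫ = 1 := by
          rw [real_inner_self_eq_norm_sq, hgnorm w₂ hp₂]; norm_num
        rw [this]; norm_num
      rw [hginner] at hpos
      have hn1p : 0 < ‖P w₁‖ := norm_pos_iff.mpr hp₁
      have hn2p : 0 < ‖P w₂‖ := norm_pos_iff.mpr hp₂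
      nlinarith [mul_pos (inv_pos.mpr hn1p) (inv_pos.mpr hn2p)]
    have ht1c : t1.card ≤ 2 * n := by
      have himg := ih K hKrank (t1.image g) ?_ ?_
      · rwa [Finset.card_image_of_injOn hginj] at himg
      · intro u hu
        obtain ⟨w, hw, rfl⟩ := Finset.mem_image.mp hu
        simp only [ht1, Finset.mem_filter] at hw
        exact hgnorm w hw.2
      · intro u₁ hu₁ u₂ hu₂ hne
        obtain ⟨w₁, hw₁, rfl⟩ := Finset.mem_image.mp hu₁
        obtain ⟨w₂, hw₂, rfl⟩ := Finset.mem_image.mp hu₂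
        simp only [ht1, Finset.mem_filter, ht, Finset.mem_erase] at hw₁ hw₂
        obtain ⟨⟨hn₁, hs₁⟩, hp₁⟩ := hw₁
        obtain ⟨⟨hn₂, hs₂⟩, hp₂⟩ := hw₂
        have hwne : w₁ ≠ w₂ := fun h => hne (by rw [h])
        have hle := hPle w₁ hs₁ w₂ hs₂ hn₁ hn₂ hwne
        rw [hginner]
        have hn1p : 0 ≤ ‖P w₁‖⁻¹ := by positivity
        have hn2p : 0 ≤ ‖P w₂‖⁻¹ := by positivity
        exact mul_nonpos_of_nonneg_of_nonpos (mul_nonneg hn1p hn2p) hle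
    omega

/-- Any set of unit vectors in `ℝⁿ` with pairwise non-positive inner products has
cardinality at most `2n`. -/
theorem unit_vectors_nonpos_inner_card_le
    {n : ℕ} (s : Finset (EuclideanSpace ℝ (Fin n)))
    (hunit : ∀ v ∈ s, ‖v‖ = 1)
    (hnonpos : ∀ v ∈ s, ∀ w ∈ s, v ≠ w → inner ℝ v w ≤ (0 : ℝ)) :
    s.card ≤ 2 * n := by
  have hd : Module.finrank ℝ (EuclideanSpace ℝ (Fin n)) ≤ n := by
    simp [finrank_euclideanSpace]
  exact aux_unit_nonpos n (EuclideanSpace ℝ (Fin n)) hd s hunit hnonpos
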